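/- Set η = π/8 and α = π/(π − 2η) = 4/3. For ξ ∈ (0, π/4) define R0(ξ) = (cot(ξ+π/2) − cot(ξ) + (4/3)·cot(4ξ/3) − (4/3)·cot((4/3)(ξ+π/2))) · sin(ξ+3π/4)·sin(ξ+π/4)/sin(π/2) and S0(ξ) = sin(ξ+3π/4)·sin(ξ+π/4)/(sin(ξ)·sin(ξ+π/2)). Then for every ξ ∈ (0, π/4): deriv S0 ξ ≠ 0, 1 + (deriv R0 ξ)/(deriv S0 ξ) = x*(ξ), and R0(ξ) − S0(ξ)·(deriv R0 ξ)/(deriv S0 ξ) = y*(ξ), where x*(ξ) = (1/18)·( 3·(5cos(2ξ/3) + cos(10ξ/3)) − √3·(5sin(2ξ/3) − sin(10ξ/3)) ) and y*(ξ) = (1/18)·( √3·(5cos(2ξ/3) − cos(10ξ/3)) + 3·(5sin(2ξ/3) + sin(10ξ/3)) ). -/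

import Mathlib

open Real Filter Set

set_option maxHeartbeats 2000000 in
/-- Explicit closed form of the 'normal' portion of the arctic curve of the uniform 20V model
(η = π/8, λ = 5η, μ = 0). -/
theorem stmt13 (R0 S0 : ℝ → ℝ)
    (hR0 : R0 = fun ξ => (Real.cot (ξ + Real.pi/2) - Real.cot ξ + (4/3) * Real.cot (4*ξ/3)
        - (4/3) * Real.cot ((4/3)*(ξ + Real.pi/2)))
        * (Real.sin (ξ + 3*Real.pi/4) * Real.sin (ξ + Real.pi/4) / Real.sin (Real.pi/2)))
    (hS0 : S0 = fun ξ => Real.sin (ξ + 3*Real.pi/4) * Real.sin (ξ + Real.pi/4)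
        / (Real.sin ξ * Real.sin (ξ + Real.pi/2))) :
    ∀ ξ ∈ Set.Ioo 0 (Real.pi/4),
      deriv S0 ξ ≠ 0 ∧
      1 + deriv R0 ξ / deriv S0 ξ
        = (1/18) * (3*(5*Real.cos (2*ξ/3) + Real.cos (10*ξ/3))
            - Real.sqrt 3 * (5*Real.sin (2*ξ/3) - Real.sin (10*ξ/3))) ∧
      R0 ξ - S0 ξ * (deriv R0 ξ / deriv S0 ξ)
        = (1/18) * (Real.sqrt 3 * (5*Real.cos (2*ξ/3) - Real.cos (10*ξ/3))
            + 3*(5*Real.sin (2*ξ/3) + Real.sin (10*ξ/3))) := by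
  have hπ := Real.pi_pos
  have hr3 : Real.sqrt 3 ^ 2 = 3 := Real.sq_sqrt (by norm_num)
  have hr0 : Real.sqrt 3 ≠ 0 := by positivity
  -- product simplification
  have hprod : ∀ y : ℝ, Real.sin (y + 3*Real.pi/4) * Real.sin (y + Real.pi/4)
      = Real.cos (2*y) / 2 := by
    intro y
    have h1 : y + 3*Real.pi/4 = (y + Real.pi/4) + Real.pi/2 := by ring
    have h2 : Real.cos (2*y) = 2 * Real.sin (y + Real.pi/4) * Real.cos (y + Real.pi/4) := by
      rw [← Real.sin_add_pi_div_two (2*y), show 2*y + Real.pi/2 = 2*(y + Real.pi/4) by ring,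
        Real.sin_two_mul]
    rw [h1, Real.sin_add_pi_div_two, h2]; ring
  -- pointwise simplification of S0
  have keyS : ∀ y ∈ Set.Ioo (0:ℝ) (Real.pi/4),
      S0 y = Real.cos (2*y) / Real.sin (2*y) := by
    intro y hy
    obtain ⟨hy1, hy2⟩ := hy
    have hsy : 0 < Real.sin y := Real.sin_pos_of_pos_of_lt_pi hy1 (by linarith)
    have hcy : 0 < Real.cos y := Real.cos_pos_of_mem_Ioo ⟨by linarith, by linarith⟩
    have hs2 : 0 < Real.sin (2*y) := Real.sin_pos_of_pos_of_lt_pi (by linarith) (by linarith)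
    rw [hS0]
    simp only [hprod, Real.sin_add_pi_div_two]
    rw [Real.sin_two_mul]
    rw [div_eq_div_iff (by positivity) (by positivity)]
    ring
  -- pointwise simplification of R0
  have keyR : ∀ y ∈ Set.Ioo (0:ℝ) (Real.pi/4),
      R0 y = (Real.cos (4*y/3) + Real.sin (4*y/3)/Real.sqrt 3 - Real.cos (2*y))
        / Real.sin (2*y) := by
    intro y hy
    obtain ⟨hy1, hy2⟩ := hy
    have hsy : 0 < Real.sin y := Real.sin_pos_of_pos_of_lt_pi hy1 (by linarith)
    have hcy : 0 < Real.cos y := Real.cos_pos_of_mem_Ioo ⟨by linarith, by linarith⟩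
    have hs2 : 0 < Real.sin (2*y) := Real.sin_pos_of_pos_of_lt_pi (by linarith) (by linarith)
    have hc2 : 0 < Real.cos (2*y) := Real.cos_pos_of_mem_Ioo ⟨by linarith, by linarith⟩
    have hs43 : 0 < Real.sin (4*y/3) := Real.sin_pos_of_pos_of_lt_pi (by linarith) (by linarith)
    have hsb : 0 < Real.sin (4*y/3 + 2*Real.pi/3) :=
      Real.sin_pos_of_pos_of_lt_pi (by linarith) (by linarith)
    have hc23v : Real.cos (2*Real.pi/3) = -(1/2) := by
      rw [show 2*Real.pi/3 = Real.pi - Real.pi/3 by ring, Real.cos_pi_sub,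
        Real.cos_pi_div_three]
    have hs23v : Real.sin (2*Real.pi/3) = Real.sqrt 3 / 2 := by
      rw [show 2*Real.pi/3 = Real.pi - Real.pi/3 by ring, Real.sin_pi_sub,
        Real.sin_pi_div_three]
    have hsbe : Real.sin (4*y/3 + 2*Real.pi/3)
        = Real.sin (4*y/3) * (-(1/2)) + Real.cos (4*y/3) * (Real.sqrt 3/2) := by
      rw [Real.sin_add, hc23v, hs23v]
    have hcbe : Real.cos (4*y/3 + 2*Real.pi/3)
        = Real.cos (4*y/3) * (-(1/2)) - Real.sin (4*y/3) * (Real.sqrt 3/2) := by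
      rw [Real.cos_add, hc23v, hs23v]
    have hK : 0 < Real.sqrt 3 * Real.cos (4*y/3) + Real.sin (4*y/3) := by
      have hc43 : 0 < Real.cos (4*y/3) := Real.cos_pos_of_mem_Ioo ⟨by linarith, by linarith⟩
      positivity
    -- step 1
    have e1 : Real.cot (y + Real.pi/2) - Real.cot y = -2 / Real.sin (2*y) := by
      rw [Real.cot_eq_cos_div_sin, Real.cot_eq_cos_div_sin, Real.cos_add_pi_div_two,
        Real.sin_add_pi_div_two, Real.sin_two_mul]
      field_simp
      linear_combination (-1) * Real.sin_sq_add_cos_sq y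
    -- step 2
    have e2 : Real.cot (4*y/3) - Real.cot (4*y/3 + 2*Real.pi/3)
        = Real.sqrt 3 / 2 / (Real.sin (4*y/3) * Real.sin (4*y/3 + 2*Real.pi/3)) := by
      rw [Real.cot_eq_cos_div_sin, Real.cot_eq_cos_div_sin,
        div_sub_div _ _ (ne_of_gt hs43) (ne_of_gt hsb)]
      congr 1
      rw [hsbe, hcbe]
      linear_combination (Real.sqrt 3/2) * Real.sin_sq_add_cos_sq (4*y/3)
    -- step 3 : product-to-sum style relation
    have e3 : Real.sin (4*y/3) * Real.sin (4*y/3 + 2*Real.pi/3)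
        = Real.cos (2*y) * Real.sin (2*y)
          / (Real.sqrt 3 * Real.cos (4*y/3) + Real.sin (4*y/3)) := by
      rw [eq_div_iff (ne_of_gt hK), hsbe]
      -- expand everything at y/3
      have hsy3 : Real.sin y = 3*Real.sin (y/3) - 4*Real.sin (y/3)^3 := by
        have h := Real.sin_three_mul (y/3); rwa [show 3*(y/3) = y by ring] at h
      have hcy3 : Real.cos y = 4*Real.cos (y/3)^3 - 3*Real.cos (y/3) := by
        have h := Real.cos_three_mul (y/3); rwa [show 3*(y/3) = y by ring] at h
      have hs23e : Real.sin (2*(y/3)) = 2 * Real.sin (y/3) * Real.cos (y/3) :=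
        Real.sin_two_mul _
      have hc23e : Real.cos (2*(y/3)) = 2 * Real.cos (y/3)^2 - 1 := Real.cos_two_mul _
      have hs43e : Real.sin (4*y/3) = 2 * Real.sin (2*(y/3)) * Real.cos (2*(y/3)) := by
        have h := Real.sin_two_mul (2*(y/3)); rwa [show 2*(2*(y/3)) = 4*y/3 by ring] at h
      have hc43e : Real.cos (4*y/3) = 2 * Real.cos (2*(y/3))^2 - 1 := by
        have h := Real.cos_two_mul (2*(y/3)); rwa [show 2*(2*(y/3)) = 4*y/3 by ring] at h
      have hpy : Real.sin (y/3)^2 + Real.cos (y/3)^2 = 1 := Real.sin_sq_add_cos_sq _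
      rw [Real.sin_two_mul, Real.cos_two_mul, hs43e, hc43e, hs23e, hc23e, hsy3, hcy3]
      set s := Real.sin (y/3)
      set c := Real.cos (y/3)
      set r := Real.sqrt 3
      linear_combination (24*s*c - 432*s*c^3 + 1536*s*c^5 - 1920*s*c^7 + 768*s*c^9) * hpy
        + (-2*s*c + 36*s*c^3 - 224*s*c^5 + 576*s*c^7 - 640*s*c^9 + 256*s*c^11) * hr3
    -- assembly
    rw [hR0]
    simp only [hprod, Real.sin_pi_div_two]
    rw [show Real.cot (y + Real.pi/2) - Real.cot y + 4/3 * Real.cot (4*y/3)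
          - 4/3 * Real.cot (4/3*(y + Real.pi/2))
        = (Real.cot (y + Real.pi/2) - Real.cot y)
          + 4/3 * (Real.cot (4*y/3) - Real.cot (4*y/3 + 2*Real.pi/3)) by
      rw [show (4:ℝ)/3*(y + Real.pi/2) = 4*y/3 + 2*Real.pi/3 by ring]; ring]
    rw [e1, e2, e3]
    field_simp
    linear_combination (4*(Real.sqrt 3*Real.cos (y*4/3) + Real.sin (y*4/3))) * hr3
  intro ξ hx
  obtain ⟨hx1, hx2⟩ := hx
  have hmem : Set.Ioo (0:ℝ) (Real.pi/4) ∈ nhds ξ := isOpen_Ioo.mem_nhds ⟨hx1, hx2⟩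
  have hs2 : 0 < Real.sin (2*ξ) := Real.sin_pos_of_pos_of_lt_pi (by linarith) (by linarith)
  have hs2ne : Real.sin (2*ξ) ≠ 0 := ne_of_gt hs2
  have h2x : HasDerivAt (fun y:ℝ => 2*y) 2 ξ := by
    simpa using (hasDerivAt_id ξ).const_mul (2:ℝ)
  have h43x : HasDerivAt (fun y:ℝ => 4*y/3) (4/3) ξ := by
    simpa using ((hasDerivAt_id ξ).const_mul (4:ℝ)).div_const (3:ℝ)
  have hcos2 : HasDerivAt (fun y:ℝ => Real.cos (2*y)) (-Real.sin (2*ξ) * 2) ξ :=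
    (Real.hasDerivAt_cos (2*ξ)).comp ξ h2x
  have hsin2 : HasDerivAt (fun y:ℝ => Real.sin (2*y)) (Real.cos (2*ξ) * 2) ξ :=
    (Real.hasDerivAt_sin (2*ξ)).comp ξ h2x
  have hcos43 : HasDerivAt (fun y:ℝ => Real.cos (4*y/3)) (-Real.sin (4*ξ/3) * (4/3)) ξ :=
    by have := (Real.hasDerivAt_cos (4*ξ/3)).comp ξ h43x; exact this
  have hsin43 : HasDerivAt (fun y:ℝ => Real.sin (4*y/3)) (Real.cos (4*ξ/3) * (4/3)) ξ :=
    by have := (Real.hasDerivAt_sin (4*ξ/3)).comp ξ h43x; exact this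
  have hSd : HasDerivAt (fun y:ℝ => Real.cos (2*y) / Real.sin (2*y))
      ((-Real.sin (2*ξ) * 2 * Real.sin (2*ξ) - Real.cos (2*ξ) * (Real.cos (2*ξ) * 2))
        / Real.sin (2*ξ)^2) ξ := hcos2.div hsin2 hs2ne
  have hnum : HasDerivAt (fun y:ℝ => Real.cos (4*y/3) + Real.sin (4*y/3)/Real.sqrt 3
      - Real.cos (2*y))
      (-Real.sin (4*ξ/3) * (4/3) + Real.cos (4*ξ/3) * (4/3) / Real.sqrt 3
        - -Real.sin (2*ξ) * 2) ξ := (hcos43.add (hsin43.div_const _)).sub hcos2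
  have hRd : HasDerivAt (fun y:ℝ => (Real.cos (4*y/3) + Real.sin (4*y/3)/Real.sqrt 3
      - Real.cos (2*y)) / Real.sin (2*y))
      (((-Real.sin (4*ξ/3) * (4/3) + Real.cos (4*ξ/3) * (4/3) / Real.sqrt 3
          - -Real.sin (2*ξ) * 2) * Real.sin (2*ξ)
        - (Real.cos (4*ξ/3) + Real.sin (4*ξ/3)/Real.sqrt 3 - Real.cos (2*ξ))
          * (Real.cos (2*ξ) * 2)) / Real.sin (2*ξ)^2) ξ := hnum.div hsin2 hs2ne
  have hDR : deriv R0 ξ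
      = ((-Real.sin (4*ξ/3) * (4/3) + Real.cos (4*ξ/3) * (4/3) / Real.sqrt 3
          - -Real.sin (2*ξ) * 2) * Real.sin (2*ξ)
        - (Real.cos (4*ξ/3) + Real.sin (4*ξ/3)/Real.sqrt 3 - Real.cos (2*ξ))
          * (Real.cos (2*ξ) * 2)) / Real.sin (2*ξ)^2 := by
    rw [Filter.EventuallyEq.deriv_eq (Filter.eventuallyEq_of_mem hmem keyR)]
    exact hRd.deriv
  have hDS : deriv S0 ξ = -2 / Real.sin (2*ξ)^2 := by
    rw [Filter.EventuallyEq.deriv_eq (Filter.eventuallyEq_of_mem hmem keyS)]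
    rw [hSd.deriv]
    rw [div_eq_div_iff (pow_ne_zero 2 hs2ne) (pow_ne_zero 2 hs2ne)]
    linear_combination (-2 * Real.sin (2*ξ)^2) * Real.sin_sq_add_cos_sq (2*ξ)
  -- atom expansions at 2ξ/3
  have hs2e : Real.sin (2*ξ) = 3*Real.sin (2*ξ/3) - 4*Real.sin (2*ξ/3)^3 := by
    have h := Real.sin_three_mul (2*ξ/3); rwa [show 3*(2*ξ/3) = 2*ξ by ring] at h
  have hc2e : Real.cos (2*ξ) = 4*Real.cos (2*ξ/3)^3 - 3*Real.cos (2*ξ/3) := by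
    have h := Real.cos_three_mul (2*ξ/3); rwa [show 3*(2*ξ/3) = 2*ξ by ring] at h
  have hs43e : Real.sin (4*ξ/3) = 2*Real.sin (2*ξ/3)*Real.cos (2*ξ/3) := by
    have h := Real.sin_two_mul (2*ξ/3); rwa [show 2*(2*ξ/3) = 4*ξ/3 by ring] at h
  have hc43e : Real.cos (4*ξ/3) = 2*Real.cos (2*ξ/3)^2 - 1 := by
    have h := Real.cos_two_mul (2*ξ/3); rwa [show 2*(2*ξ/3) = 4*ξ/3 by ring] at h
  have hs10 : Real.sin (10*ξ/3) = Real.sin (2*ξ)*Real.cos (4*ξ/3)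
      + Real.cos (2*ξ)*Real.sin (4*ξ/3) := by
    have h := Real.sin_add (2*ξ) (4*ξ/3); rwa [show 2*ξ + 4*ξ/3 = 10*ξ/3 by ring] at h
  have hc10 : Real.cos (10*ξ/3) = Real.cos (2*ξ)*Real.cos (4*ξ/3)
      - Real.sin (2*ξ)*Real.sin (4*ξ/3) := by
    have h := Real.cos_add (2*ξ) (4*ξ/3); rwa [show 2*ξ + 4*ξ/3 = 10*ξ/3 by ring] at h
  have hpy : Real.sin (2*ξ/3)^2 + Real.cos (2*ξ/3)^2 = 1 := Real.sin_sq_add_cos_sq _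
  have h3s : 3*Real.sin (2*ξ/3) - 4*Real.sin (2*ξ/3)^3 ≠ 0 := by
    rw [← hs2e]; exact hs2ne
  have hDSne : deriv S0 ξ ≠ 0 := by
    rw [hDS]
    exact div_ne_zero (by norm_num) (pow_ne_zero 2 hs2ne)
  refine ⟨hDSne, ?_, ?_⟩
  · rw [hDR, hDS, hs10, hc10, hs2e, hc2e, hs43e, hc43e]
    set s := Real.sin (2*ξ/3)
    set c := Real.cos (2*ξ/3)
    set r := Real.sqrt 3
    have hs0 : s ≠ 0 := by intro h; apply h3s; rw [h]; ring
    have h3q : 3 - s^2*4 ≠ 0 := by intro h; apply h3s; linear_combination s * h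
    field_simp
    ring_nf
    linear_combination ((-108)*r^1 + (-180)*c^1*r^1 + (864)*c^2*r^1 + (720)*c^3*r^1 + (-1728)*c^4*r^1 + (-360)*s^1 + (720)*s^1*c^2 + (864)*s^2*r^1 + (-720)*s^2*c^1*r^1 + (1728)*s^2*c^2*r^1 + (-1728)*s^4*r^1) * hpy
      + ((48)*s^1 + (-48)*s^1*c^4 + (-24)*s^3 + (48)*s^3*c^2) * hr3
  · rw [hDR, hDS, keyR ξ ⟨hx1, hx2⟩, keyS ξ ⟨hx1, hx2⟩, hs10, hc10, hs2e, hc2e, hs43e, hc43e]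
    set s := Real.sin (2*ξ/3)
    set c := Real.cos (2*ξ/3)
    set r := Real.sqrt 3
    have hs0 : s ≠ 0 := by intro h; apply h3s; rw [h]; ring
    have h3q : 3 - s^2*4 ≠ 0 := by intro h; apply h3s; linear_combination s * h
    field_simp
    ring_nf
    linear_combination ((108)*r^1 + (-324)*c^1*r^1 + (-1080)*c^2*r^1 + (3024)*c^3*r^1 + (3456)*c^4*r^1 + (-8640)*c^5*r^1 + (-3456)*c^6*r^1 + (6912)*c^7*r^1 + (-756)*s^1*c^1 + (3888)*s^1*c^3 + (-3456)*s^1*c^5 + (216)*s^2*r^1 + (2592)*s^2*c^1*r^1 + (-2160)*s^2*c^2*r^1 + (1728)*s^2*c^3*r^1 + (3456)*s^2*c^4*r^1 + (-6912)*s^2*c^5*r^1 + (288)*s^3*c^1 + (576)*s^3*c^3 + (288)*s^4*r^1 + (-5184)*s^4*c^1*r^1 + (-576)*s^4*c^2*r^1 + (6912)*s^4*c^3*r^1 + (-576)*s^5*c^1) * hpy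
      + ((-36)*s^1*c^1 + (-180)*s^1*c^3 + (144)*s^1*c^5 + (-60)*s^3*c^1 + (240)*s^3*c^3 + (-192)*s^3*c^5 + (288)*s^5*c^1 + (-192)*s^7*c^1) * hr3
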